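/- arXiv:0907.0480 — 3 statements merged into one kernel-verified Lean document; each statement's English description precedes it below -/
import Mathlib

section
/- With the identification ι: ℝ³ ≅ su(2) as above, for every g ∈ SU(2) the map v ↦ ι⁻¹(g·ι(v)·g⁻¹) is a rotation of ℝ³, i.e., lies in SO(3); moreover the resulting homomorphism δ: SU(2) → SO(3) is surjective with kernel {I, −I}. -/
set_option maxHeartbeats 1000000
open Matrix Complex

noncomputable def iota (v : Fin 3 → ℝ) : Matrix (Fin 2) (Fin 2) ℂ :=
  (v 0) • ((1 / 2 : ℂ) • !![0, Complex.I; Complex.I, 0]) +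
  (v 1) • ((1 / 2 : ℂ) • !![0, -1; 1, 0]) +
  (v 2) • ((1 / 2 : ℂ) • !![Complex.I, 0; 0, -Complex.I])

lemma iota_eq (v : Fin 3 → ℝ) :
    iota v = !![⟨0, v 2 / 2⟩, ⟨-(v 1) / 2, v 0 / 2⟩; ⟨v 1 / 2, v 0 / 2⟩, ⟨0, -(v 2) / 2⟩] := by
  ext i j
  fin_cases i <;> fin_cases j <;>
    simp [iota, Complex.ext_iff, Complex.mul_im, Complex.mul_re] <;>
    first
      | exact ⟨trivial, trivial⟩
      | (constructor <;> ring)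
      | ring

def q2 (x y z w : ℝ) : Matrix (Fin 2) (Fin 2) ℂ :=
  !![⟨x, y⟩, ⟨z, w⟩; ⟨-z, w⟩, ⟨x, -y⟩]

def adjq (x y z w : ℝ) : Matrix (Fin 2) (Fin 2) ℂ :=
  !![⟨x, -y⟩, ⟨-z, -w⟩; ⟨z, -w⟩, ⟨x, y⟩]

def rot (x y z w : ℝ) : Matrix (Fin 3) (Fin 3) ℝ :=
  !![x^2-y^2-z^2+w^2, -2*x*y-2*z*w, -2*x*z+2*y*w;
     2*x*y-2*z*w,     x^2-y^2+z^2-w^2, -2*x*w-2*y*z;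
     2*x*z+2*y*w,     2*x*w-2*y*z,     x^2+y^2-z^2-w^2]

lemma rot_mulVec (x y z w : ℝ) (v : Fin 3 → ℝ) :
    (rot x y z w).mulVec v = ![(x^2-y^2-z^2+w^2) * v 0 + (-2*x*y-2*z*w) * v 1 + (-2*x*z+2*y*w) * v 2,
      (2*x*y-2*z*w) * v 0 + (x^2-y^2+z^2-w^2) * v 1 + (-2*x*w-2*y*z) * v 2,
      (2*x*z+2*y*w) * v 0 + (2*x*w-2*y*z) * v 1 + (x^2+y^2-z^2-w^2) * v 2] := by
  funext i
  fin_cases i <;>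
    simp [rot, mulVec, dotProduct, Fin.sum_univ_three]

lemma key (x y z w : ℝ) (v : Fin 3 → ℝ) :
    iota ((rot x y z w).mulVec v) = q2 x y z w * iota v * adjq x y z w := by
  rw [rot_mulVec, iota_eq, iota_eq, q2, adjq, Matrix.mul_fin_two, Matrix.mul_fin_two]
  ext i j
  fin_cases i <;> fin_cases j <;>
    simp [Complex.ext_iff, Complex.mul_re, Complex.mul_im] <;>
    constructor <;> first | trivial | ring

lemma det_q2 (x y z w : ℝ) : (q2 x y z w).det = (⟨x^2+y^2+z^2+w^2, 0⟩ : ℂ) := by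
  simp [q2, Matrix.det_fin_two, Complex.ext_iff, Complex.mul_re, Complex.mul_im]
  constructor <;> ring

lemma inv_q2 {x y z w : ℝ} (h : x^2+y^2+z^2+w^2 = 1) :
    (q2 x y z w)⁻¹ = adjq x y z w := by
  have hd : (q2 x y z w).det = 1 := by rw [det_q2, h]; rfl
  rw [Matrix.inv_def, hd, q2, Matrix.adjugate_fin_two_of]
  ext i j
  fin_cases i <;> fin_cases j <;> simp [adjq, Complex.ext_iff]

-- structure of SU(2)
lemma su2_struct (g : Matrix.specialUnitaryGroup (Fin 2) ℂ) :
    (g : Matrix (Fin 2) (Fin 2) ℂ) =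
      q2 ((g : Matrix (Fin 2) (Fin 2) ℂ) 0 0).re ((g : Matrix (Fin 2) (Fin 2) ℂ) 0 0).im
         ((g : Matrix (Fin 2) (Fin 2) ℂ) 0 1).re ((g : Matrix (Fin 2) (Fin 2) ℂ) 0 1).im ∧
    ((g : Matrix (Fin 2) (Fin 2) ℂ) 0 0).re^2 + ((g : Matrix (Fin 2) (Fin 2) ℂ) 0 0).im^2 +
      ((g : Matrix (Fin 2) (Fin 2) ℂ) 0 1).re^2 + ((g : Matrix (Fin 2) (Fin 2) ℂ) 0 1).im^2 = 1 := by
  obtain ⟨hu, hd⟩ := Matrix.mem_specialUnitaryGroup_iff.mp g.2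
  set A := (g : Matrix (Fin 2) (Fin 2) ℂ) with hA
  have hinv : A⁻¹ = star A := inv_eq_right_inv (Matrix.mem_unitaryGroup_iff.mp hu)
  have hadj : A.adjugate = star A := by
    rw [← hinv, Matrix.inv_def, hd]; simp
  have h11 : A 1 1 = star (A 0 0) := by
    have := congrFun (congrFun hadj 0) 0
    simpa [Matrix.adjugate_fin_two, Matrix.star_apply] using this
  have h10 : A 1 0 = -star (A 0 1) := by
    have := congrFun (congrFun hadj 0) 1
    simp [Matrix.adjugate_fin_two, Matrix.star_apply] at this
    rw [eq_comm, ← neg_eq_iff_eq_neg] at this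
    rw [← this]
    simp
  have hdet : A 0 0 * A 1 1 - A 0 1 * A 1 0 = 1 := by
    rw [← Matrix.det_fin_two]; exact hd
  constructor
  · ext i j
    fin_cases i <;> fin_cases j <;>
      simp [q2, Complex.ext_iff, h11, h10]
  · rw [h11, h10] at hdet
    have hre := congrArg Complex.re hdet
    simp [Complex.mul_re, Complex.mul_im] at hre
    nlinarith [hre]

lemma rot_mem {x y z w : ℝ} (h : x^2+y^2+z^2+w^2 = 1) :
    rot x y z w ∈ Matrix.orthogonalGroup (Fin 3) ℝ := by
  rw [Matrix.mem_orthogonalGroup_iff]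
  have hstar : star (rot x y z w) = rot x (-y) (-z) (-w) := by
    ext i j
    fin_cases i <;> fin_cases j <;>
      simp [rot, Matrix.star_apply, Matrix.transpose_apply] <;> ring
  rw [← Matrix.conjTranspose_eq_transpose_of_trivial, ← Matrix.star_eq_conjTranspose, hstar]
  ext i j
  fin_cases i <;> fin_cases j <;>
    simp [rot, Matrix.mul_apply, Fin.sum_univ_three, Matrix.one_apply] <;>
    nlinarith [h]

lemma rot_det {x y z w : ℝ} (h : x^2+y^2+z^2+w^2 = 1) :
    (rot x y z w).det = 1 := by
  rw [Matrix.det_fin_three]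
  simp [rot]
  nlinarith [h, sq_nonneg (x^2+y^2+z^2+w^2)]

lemma q2_mem {x y z w : ℝ} (h : x^2+y^2+z^2+w^2 = 1) :
    q2 x y z w ∈ Matrix.specialUnitaryGroup (Fin 2) ℂ := by
  rw [Matrix.mem_specialUnitaryGroup_iff]
  constructor
  · rw [Matrix.mem_unitaryGroup_iff]
    ext i j
    fin_cases i <;> fin_cases j <;>
      simp [q2, Matrix.mul_apply, Fin.sum_univ_two, Matrix.one_apply, Matrix.star_apply,
        Complex.ext_iff, Complex.mul_re, Complex.mul_im] <;>
      constructor <;> first | trivial | nlinarith [h]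
  · rw [det_q2, h]; rfl

lemma iota_inj {u v : Fin 3 → ℝ} (h : iota u = iota v) : u = v := by
  rw [iota_eq, iota_eq] at h
  have h00 := congrFun (congrFun h 0) 0
  have h10 := congrFun (congrFun h 1) 0
  simp [Complex.ext_iff] at h00 h10
  funext i
  fin_cases i <;> simp <;> linarith [h00, h10.1, h10.2]

-- uniqueness of the rotation matrix realizing the conjugation action
lemma rot_unique {M N : Matrix (Fin 3) (Fin 3) ℝ}
    (h : ∀ v : Fin 3 → ℝ, iota (M.mulVec v) = iota (N.mulVec v)) : M = N := by
  ext i j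
  have := congrFun (iota_inj (h (Pi.single j 1))) i
  simpa [Matrix.mulVec_single] using this

noncomputable def delta (g : Matrix.specialUnitaryGroup (Fin 2) ℂ) : Matrix (Fin 3) (Fin 3) ℝ :=
  rot ((g : Matrix (Fin 2) (Fin 2) ℂ) 0 0).re ((g : Matrix (Fin 2) (Fin 2) ℂ) 0 0).im
      ((g : Matrix (Fin 2) (Fin 2) ℂ) 0 1).re ((g : Matrix (Fin 2) (Fin 2) ℂ) 0 1).im

lemma delta_conj (g : Matrix.specialUnitaryGroup (Fin 2) ℂ) (v : Fin 3 → ℝ) :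
    iota ((delta g).mulVec v) =
      (g : Matrix (Fin 2) (Fin 2) ℂ) * iota v * (g : Matrix (Fin 2) (Fin 2) ℂ)⁻¹ := by
  obtain ⟨hg, hn⟩ := su2_struct g
  rw [delta, key, hg, inv_q2 hn]
  simp [q2]

lemma delta_mem (g : Matrix.specialUnitaryGroup (Fin 2) ℂ) :
    delta g ∈ Matrix.orthogonalGroup (Fin 3) ℝ :=
  rot_mem (su2_struct g).2

lemma delta_det (g : Matrix.specialUnitaryGroup (Fin 2) ℂ) : (delta g).det = 1 :=
  rot_det (su2_struct g).2

lemma delta_unique (g : Matrix.specialUnitaryGroup (Fin 2) ℂ) (M : Matrix (Fin 3) (Fin 3) ℝ)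
    (h : ∀ v : Fin 3 → ℝ, iota (M.mulVec v) =
      (g : Matrix (Fin 2) (Fin 2) ℂ) * iota v * (g : Matrix (Fin 2) (Fin 2) ℂ)⁻¹) :
    M = delta g :=
  rot_unique (fun v => by rw [h v, delta_conj])

lemma delta_mul (g h : Matrix.specialUnitaryGroup (Fin 2) ℂ) :
    delta (g * h) = delta g * delta h := by
  refine (delta_unique _ _ (fun v => ?_)).symm
  rw [← Matrix.mulVec_mulVec, delta_conj, delta_conj]
  have hc : ((g * h : Matrix.specialUnitaryGroup (Fin 2) ℂ) : Matrix (Fin 2) (Fin 2) ℂ)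
      = (g : Matrix (Fin 2) (Fin 2) ℂ) * (h : Matrix (Fin 2) (Fin 2) ℂ) := rfl
  rw [hc, Matrix.mul_inv_rev]
  noncomm_ring

lemma delta_eq_one_iff (g : Matrix.specialUnitaryGroup (Fin 2) ℂ) :
    delta g = 1 ↔ ((g : Matrix (Fin 2) (Fin 2) ℂ) = 1 ∨ (g : Matrix (Fin 2) (Fin 2) ℂ) = -1) := by
  obtain ⟨hg, hn⟩ := su2_struct g
  set x := ((g : Matrix (Fin 2) (Fin 2) ℂ) 0 0).re
  set y := ((g : Matrix (Fin 2) (Fin 2) ℂ) 0 0).im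
  set z := ((g : Matrix (Fin 2) (Fin 2) ℂ) 0 1).re
  set w := ((g : Matrix (Fin 2) (Fin 2) ℂ) 0 1).im
  constructor
  · intro h
    have hδ : rot x y z w = 1 := h
    have e00 := congrFun (congrFun hδ 0) 0
    have e11 := congrFun (congrFun hδ 1) 1
    have e22 := congrFun (congrFun hδ 2) 2
    simp [rot, Matrix.one_apply] at e00 e11 e22
    have hx2 : x^2 = 1 := by nlinarith
    have hy : y = 0 := by nlinarith [sq_nonneg y, sq_nonneg z, sq_nonneg w]
    have hz : z = 0 := by nlinarith [sq_nonneg y, sq_nonneg z, sq_nonneg w]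
    have hw : w = 0 := by nlinarith [sq_nonneg y, sq_nonneg z, sq_nonneg w]
    have : (x - 1) * (x + 1) = 0 := by nlinarith
    rcases mul_eq_zero.mp this with hx | hx
    · left
      rw [hg, hy, hz, hw, show x = 1 by linarith]
      ext i j
      fin_cases i <;> fin_cases j <;> simp [q2, Matrix.one_apply, Complex.ext_iff]
    · right
      rw [hg, hy, hz, hw, show x = -1 by linarith]
      ext i j
      fin_cases i <;> fin_cases j <;> simp [q2, Matrix.one_apply, Complex.ext_iff]
  · intro h
    have hone : delta g = rot x y z w := rfl
    have hr1 : rot 1 0 0 0 = (1 : Matrix (Fin 3) (Fin 3) ℝ) := by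
      ext i j
      fin_cases i <;> fin_cases j <;> norm_num [rot, Matrix.one_apply, Fin.ext_iff]
    have hrm : rot (-1) 0 0 0 = (1 : Matrix (Fin 3) (Fin 3) ℝ) := by
      ext i j
      fin_cases i <;> fin_cases j <;> norm_num [rot, Matrix.one_apply, Fin.ext_iff]
    rcases h with h | h <;>
      [(have h00 : (g : Matrix (Fin 2) (Fin 2) ℂ) 0 0 = 1 := by rw [h]; simp [Matrix.one_apply]);
       (have h00 : (g : Matrix (Fin 2) (Fin 2) ℂ) 0 0 = -1 := by rw [h]; simp [Matrix.one_apply])] <;>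
      (have h01 : (g : Matrix (Fin 2) (Fin 2) ℂ) 0 1 = 0 := by
        rw [h]; simp [Matrix.one_apply]) <;>
      (rw [hone, show x = ((g : Matrix (Fin 2) (Fin 2) ℂ) 0 0).re from rfl,
        show y = ((g : Matrix (Fin 2) (Fin 2) ℂ) 0 0).im from rfl,
        show z = ((g : Matrix (Fin 2) (Fin 2) ℂ) 0 1).re from rfl,
        show w = ((g : Matrix (Fin 2) (Fin 2) ℂ) 0 1).im from rfl, h00, h01]) <;>
      simpa using (by assumption : _ = (1 : Matrix (Fin 3) (Fin 3) ℝ))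

def Rz (c s : ℝ) : Matrix (Fin 3) (Fin 3) ℝ := !![c, -s, 0; s, c, 0; 0, 0, 1]
def Rx (c s : ℝ) : Matrix (Fin 3) (Fin 3) ℝ := !![1, 0, 0; 0, c, -s; 0, s, c]

lemma half_angle {c s : ℝ} (h : c^2 + s^2 = 1) :
    ∃ p q : ℝ, p^2 + q^2 = 1 ∧ p^2 - q^2 = c ∧ 2*p*q = s := by
  by_cases hc : c = -1
  · have hs2 : s^2 = 0 := by nlinarith
    have hs : s = 0 := by
      have := pow_eq_zero_iff (n := 2) (by norm_num) |>.mp hs2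
      exact this
    exact ⟨0, 1, by norm_num, by rw [hc]; norm_num, by rw [hs]; ring⟩
  · have hge : c ≥ -1 := by nlinarith [sq_nonneg s]
    have hgt : 1 + c > 0 := by
      rcases lt_or_eq_of_le hge with h' | h'
      · linarith
      · exact absurd h'.symm hc
    set p := Real.sqrt ((1+c)/2) with hp
    have hp2 : p^2 = (1+c)/2 := Real.sq_sqrt (by linarith)
    have hp0 : p > 0 := Real.sqrt_pos.mpr (by linarith)
    have h4 : (2*p)^2 = 2*(1+c) := by rw [mul_pow, hp2]; ring
    have hq2 : (s/(2*p))^2 = (1-c)/2 := by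
      rw [div_pow, h4, div_eq_div_iff (by linarith) (by norm_num)]
      linear_combination 2*h
    refine ⟨p, s/(2*p), by linarith, by linarith, ?_⟩
    field_simp

lemma rot_z {p q : ℝ} (h : p^2 + q^2 = 1) : rot p q 0 0 = Rz (p^2-q^2) (2*p*q) := by
  ext i j
  fin_cases i <;> fin_cases j <;> norm_num [rot, Rz] <;> linarith

lemma rot_x {p q : ℝ} (h : p^2 + q^2 = 1) : rot p 0 0 q = Rx (p^2-q^2) (2*p*q) := by
  ext i j
  fin_cases i <;> fin_cases j <;> norm_num [rot, Rx] <;> linarith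

lemma delta_of_q2 {x y z w : ℝ} (h : x^2+y^2+z^2+w^2 = 1) :
    delta ⟨q2 x y z w, q2_mem h⟩ = rot x y z w := by
  simp [delta, q2]

lemma exists_delta_Rz {c s : ℝ} (h : c^2 + s^2 = 1) :
    ∃ g : Matrix.specialUnitaryGroup (Fin 2) ℂ, delta g = Rz c s := by
  obtain ⟨p, q, h1, h2, h3⟩ := half_angle h
  refine ⟨⟨q2 p q 0 0, q2_mem (by linear_combination h1)⟩, ?_⟩
  rw [delta_of_q2 (by linear_combination h1), rot_z h1, h2, h3]

lemma exists_delta_Rx {c s : ℝ} (h : c^2 + s^2 = 1) :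
    ∃ g : Matrix.specialUnitaryGroup (Fin 2) ℂ, delta g = Rx c s := by
  obtain ⟨p, q, h1, h2, h3⟩ := half_angle h
  refine ⟨⟨q2 p 0 0 q, q2_mem (by linear_combination h1)⟩, ?_⟩
  rw [delta_of_q2 (by linear_combination h1), rot_x h1, h2, h3]

lemma star_real3 (M : Matrix (Fin 3) (Fin 3) ℝ) : star M = Mᵀ := by
  ext i j; simp [Matrix.star_apply]

lemma orth_pair {M : Matrix (Fin 3) (Fin 3) ℝ} (h : M ∈ Matrix.orthogonalGroup (Fin 3) ℝ) :
    M * Mᵀ = 1 ∧ Mᵀ * M = 1 := by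
  constructor
  · have h' := h
    rw [Matrix.mem_orthogonalGroup_iff] at h'
    exact h'
  · have h' := h
    rw [Matrix.mem_orthogonalGroup_iff'] at h'
    exact h'

lemma delta_surj (M : Matrix (Fin 3) (Fin 3) ℝ) (hM : M ∈ Matrix.orthogonalGroup (Fin 3) ℝ)
    (hdet : M.det = 1) : ∃ g : Matrix.specialUnitaryGroup (Fin 2) ℂ, delta g = M := by
  obtain ⟨hMMt, hMtM⟩ := orth_pair hM
  have hu : (M 0 2)^2 + (M 1 2)^2 + (M 2 2)^2 = 1 := by
    have e := congrFun (congrFun hMtM 2) 2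
    simp [Matrix.mul_apply, Fin.sum_univ_three, Matrix.one_apply, Matrix.transpose_apply] at e
    linear_combination e
  set s2 := Real.sqrt ((M 0 2)^2 + (M 1 2)^2) with hs2def
  have hs2 : s2^2 = (M 0 2)^2 + (M 1 2)^2 := Real.sq_sqrt (by positivity)
  have h2 : (M 2 2)^2 + s2^2 = 1 := by rw [hs2]; linarith
  obtain ⟨c1, s1, h1, hA02, hA12⟩ :
      ∃ c1 s1 : ℝ, c1^2 + s1^2 = 1 ∧ s1 * s2 = M 0 2 ∧ -(c1 * s2) = M 1 2 := by
    by_cases h0 : s2 = 0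
    · have hu0 : (M 0 2)^2 = 0 := by nlinarith [sq_nonneg (M 1 2)]
      have hu1 : (M 1 2)^2 = 0 := by nlinarith [sq_nonneg (M 0 2)]
      refine ⟨1, 0, by norm_num, ?_, ?_⟩
      · rw [(pow_eq_zero_iff (n := 2) (by norm_num)).mp hu0]; ring
      · rw [(pow_eq_zero_iff (n := 2) (by norm_num)).mp hu1, h0]; ring
    · refine ⟨-(M 1 2)/s2, M 0 2/s2, ?_, ?_, ?_⟩
      · field_simp
        linear_combination hs2.symm
      · field_simp
      · field_simp
  obtain ⟨g1, hg1⟩ := exists_delta_Rz h1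
  obtain ⟨g2, hg2⟩ := exists_delta_Rx h2
  obtain ⟨A, hAdef⟩ : ∃ A, A = Rz c1 s1 * Rx (M 2 2) s2 := ⟨_, rfl⟩
  have hAdelta : delta (g1 * g2) = A := by rw [delta_mul, hg1, hg2, hAdef]
  obtain ⟨hAAt, hAtA⟩ := orth_pair (hAdelta ▸ delta_mem (g1 * g2))
  obtain ⟨B, hBdef⟩ : ∃ B, B = Aᵀ * M := ⟨_, rfl⟩
  have hBBt : B * Bᵀ = 1 := by
    rw [hBdef, Matrix.transpose_mul, Matrix.transpose_transpose, Matrix.mul_assoc,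
      ← Matrix.mul_assoc M, hMMt, Matrix.one_mul, hAtA]
  have hBtB : Bᵀ * B = 1 := by
    rw [hBdef, Matrix.transpose_mul, Matrix.transpose_transpose, Matrix.mul_assoc,
      ← Matrix.mul_assoc A, hAAt, Matrix.one_mul, hMtM]
  have hAe : ∀ i j, A i j = !![c1, -(s1*(M 2 2)), s1*s2;
      s1, c1*(M 2 2), -(c1*s2); 0, s2, M 2 2] i j := by
    intro i j
    rw [hAdef]
    clear hAdef
    fin_cases i <;> fin_cases j <;>
      norm_num [Rz, Rx, Matrix.mul_apply, Fin.sum_univ_three, Matrix.vecHead, Matrix.vecTail, Matrix.cons_val_two] <;>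
      ring
  have hB02 : B 0 2 = 0 := by
    have e : B 0 2 = A 0 0 * M 0 2 + A 1 0 * M 1 2 + A 2 0 * M 2 2 := by
      rw [hBdef]; simp [Matrix.mul_apply, Fin.sum_univ_three, Matrix.transpose_apply]
    rw [e, hAe 0 0, hAe 1 0, hAe 2 0, ← hA02, ← hA12]
    simp
    ring
  have hB12 : B 1 2 = 0 := by
    have e : B 1 2 = A 0 1 * M 0 2 + A 1 1 * M 1 2 + A 2 1 * M 2 2 := by
      rw [hBdef]; simp [Matrix.mul_apply, Fin.sum_univ_three, Matrix.transpose_apply]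
    rw [e, hAe 0 1, hAe 1 1, hAe 2 1, ← hA02, ← hA12]
    simp
    linear_combination (-((M 2 2) * s2)) * h1
  have hB22 : B 2 2 = 1 := by
    have e : B 2 2 = A 0 2 * M 0 2 + A 1 2 * M 1 2 + A 2 2 * M 2 2 := by
      rw [hBdef]; simp [Matrix.mul_apply, Fin.sum_univ_three, Matrix.transpose_apply]
    rw [e, hAe 0 2, hAe 1 2, hAe 2 2, ← hA02, ← hA12]
    simp
    linear_combination (s2^2) * h1 + h2
  have hrow2 : B 2 0 ^2 + B 2 1 ^2 = 0 := by
    have e := congrFun (congrFun hBBt 2) 2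
    simp [Matrix.mul_apply, Fin.sum_univ_three, Matrix.one_apply, Matrix.transpose_apply] at e
    rw [hB22] at e
    linear_combination e
  have hB20 : B 2 0 = 0 := by
    have : B 2 0 ^ 2 = 0 := by nlinarith [sq_nonneg (B 2 1)]
    exact (pow_eq_zero_iff (n := 2) (by norm_num)).mp this
  have hB21 : B 2 1 = 0 := by
    have : B 2 1 ^ 2 = 0 := by nlinarith [sq_nonneg (B 2 0)]
    exact (pow_eq_zero_iff (n := 2) (by norm_num)).mp this
  have n1 : B 0 0 ^2 + B 1 0 ^2 = 1 := by
    have e := congrFun (congrFun hBtB 0) 0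
    simp [Matrix.mul_apply, Fin.sum_univ_three, Matrix.one_apply, Matrix.transpose_apply] at e
    rw [hB20] at e
    linear_combination e
  have p : B 0 0 * B 0 1 + B 1 0 * B 1 1 = 0 := by
    have e := congrFun (congrFun hBtB 0) 1
    simp [Matrix.mul_apply, Fin.sum_univ_three, Matrix.one_apply, Matrix.transpose_apply] at e
    rw [hB20, hB21] at e
    linear_combination e
  have hdB : B.det = 1 := by
    have hdA : A.det = 1 := by rw [← hAdelta]; exact delta_det (g1 * g2)
    rw [hBdef, Matrix.det_mul, Matrix.det_transpose, hdA, hdet, one_mul]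
  have d : B 0 0 * B 1 1 - B 0 1 * B 1 0 = 1 := by
    rw [Matrix.det_fin_three] at hdB
    rw [hB02, hB12, hB20, hB21, hB22] at hdB
    linear_combination hdB
  have hB11 : B 1 1 = B 0 0 := by
    linear_combination (-(B 1 1)) * n1 + (B 0 0) * d + (B 1 0) * p
  have hB01 : B 0 1 = -(B 1 0) := by
    linear_combination (-(B 0 1)) * n1 + (-(B 1 0)) * d + (B 0 0) * p
  obtain ⟨g3, hg3⟩ := exists_delta_Rz n1
  have hBeq : B = Rz (B 0 0) (B 1 0) := by
    ext i j
    fin_cases i <;> fin_cases j <;>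
      simp [Rz, hB02, hB12, hB22, hB20, hB21, hB11, hB01]
  refine ⟨g1 * g2 * g3, ?_⟩
  rw [delta_mul, hAdelta, hg3, ← hBeq, hBdef, ← Matrix.mul_assoc, hAAt, Matrix.one_mul]

/-- For every g ∈ SU(2), the map v ↦ ι⁻¹(g·ι(v)·g⁻¹) is a rotation, i.e. it is given by a
unique matrix δ(g) ∈ SO(3); the resulting map δ : SU(2) → SO(3) is a group homomorphism,
is surjective, and has kernel {I, −I}. -/
theorem su2_double_covers_so3 :
    ∃ δ : Matrix.specialUnitaryGroup (Fin 2) ℂ → Matrix (Fin 3) (Fin 3) ℝ,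
      (∀ g : Matrix.specialUnitaryGroup (Fin 2) ℂ,
          δ g ∈ Matrix.orthogonalGroup (Fin 3) ℝ ∧ (δ g).det = 1 ∧
          (∀ v : Fin 3 → ℝ, iota ((δ g).mulVec v) = (g : Matrix (Fin 2) (Fin 2) ℂ) * iota v * (g : Matrix (Fin 2) (Fin 2) ℂ)⁻¹) ∧
          (∀ M : Matrix (Fin 3) (Fin 3) ℝ,
            (∀ v : Fin 3 → ℝ, iota (M.mulVec v) = (g : Matrix (Fin 2) (Fin 2) ℂ) * iota v * (g : Matrix (Fin 2) (Fin 2) ℂ)⁻¹) →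
            M = δ g)) ∧
      (∀ g h : Matrix.specialUnitaryGroup (Fin 2) ℂ, δ (g * h) = δ g * δ h) ∧
      (∀ M : Matrix (Fin 3) (Fin 3) ℝ, M ∈ Matrix.orthogonalGroup (Fin 3) ℝ → M.det = 1 →
        ∃ g : Matrix.specialUnitaryGroup (Fin 2) ℂ, δ g = M) ∧
      (∀ g : Matrix.specialUnitaryGroup (Fin 2) ℂ,
        δ g = 1 ↔ ((g : Matrix (Fin 2) (Fin 2) ℂ) = 1 ∨ (g : Matrix (Fin 2) (Fin 2) ℂ) = -1)) := by
  exact ⟨delta, fun g => ⟨delta_mem g, delta_det g, delta_conj g,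
    fun M hM => delta_unique g M hM⟩, delta_mul,
    fun M hMo hMd => delta_surj M hMo hMd, delta_eq_one_iff⟩
end

section
/- Let C(t) = (t−i)/(t+i), ζ = e^{2πi/3}, and define γ: ℝ → ℝ (for t with C(t)·ζ ≠ 1) by γ(t) = C⁻¹(ζ·C(t)), i.e., the conjugation by the Cayley transform of rotation by 2π/3. With Q(w) = w³ + w⁻³ and p(t) = (d/dt)(Q(C(t))/C(t)), one has p(γ(t))·γ'(t) = ζ⁻¹·p(t) = e^{−2πi/3} p(t) for all t in the domain of γ. -/
/-- The Cayley transform C(t) = (t − i)/(t + i). -/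
noncomputable def cayley (x : ℝ) : ℂ := ((x : ℂ) - Complex.I) / ((x : ℂ) + Complex.I)

/-- Q(w) = w³ + w⁻³. -/
noncomputable def Qfun (w : ℂ) : ℂ := w ^ (3 : ℤ) + w ^ (-3 : ℤ)

/-- p(t) = (d/dt)(Q(C(t))/C(t)). -/
noncomputable def pfun (t : ℝ) : ℂ := deriv (fun s : ℝ => Qfun (cayley s) / cayley s) t

lemma num_ne (x : ℝ) : (x : ℂ) - Complex.I ≠ 0 := by
  intro h
  have := congrArg Complex.im h
  simp at this

lemma den_ne (x : ℝ) : (x : ℂ) + Complex.I ≠ 0 := by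
  intro h
  have := congrArg Complex.im h
  simp at this

lemma cayley_ne_zero (x : ℝ) : cayley x ≠ 0 :=
  div_ne_zero (num_ne x) (den_ne x)

lemma cayley_diff (x : ℝ) : DifferentiableAt ℝ cayley x := by
  unfold cayley
  apply DifferentiableAt.div
  · exact (Complex.ofRealCLM.differentiable.differentiableAt).sub_const _
  · exact (Complex.ofRealCLM.differentiable.differentiableAt).add_const _
  · exact den_ne x

lemma g_diff (x : ℝ) : DifferentiableAt ℝ (fun s : ℝ => Qfun (cayley s) / cayley s) x := by
  have hQ : DifferentiableAt ℂ Qfun (cayley x) := by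
    unfold Qfun
    apply DifferentiableAt.add
    · exact (differentiableAt_zpow.mpr (Or.inl (cayley_ne_zero x)))
    · exact (differentiableAt_zpow.mpr (Or.inl (cayley_ne_zero x)))
  have h1 : DifferentiableAt ℝ (fun s : ℝ => Qfun (cayley s)) x :=
    (hQ.restrictScalars ℝ).comp x (cayley_diff x)
  exact h1.div (cayley_diff x) (cayley_ne_zero x)

/-- Equivariance of the potential coefficient p under the Cayley-conjugated rotation by
2π/3: if ζ = e^{2πi/3} and γ satisfies C(γ(t)) = ζ·C(t), then
p(γ(t))·γ'(t) = ζ⁻¹·p(t) = e^{−2πi/3}·p(t). -/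
theorem amsler_potential_equivariance (S : Set ℝ) (hS : IsOpen S)
    (γ : ℝ → ℝ) (hγdiff : ∀ t ∈ S, DifferentiableAt ℝ γ t)
    (hγC : ∀ t ∈ S, cayley (γ t)
      = Complex.exp (2 * Real.pi * Complex.I / 3) * cayley t) :
    ∀ t ∈ S, pfun (γ t) * ((deriv γ t : ℝ) : ℂ)
      = (Complex.exp (2 * Real.pi * Complex.I / 3))⁻¹ * pfun t ∧
      (Complex.exp (2 * Real.pi * Complex.I / 3))⁻¹
        = Complex.exp (-(2 * Real.pi * Complex.I) / 3) := by
  intro t ht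
  set ζ : ℂ := Complex.exp (2 * Real.pi * Complex.I / 3) with hζdef
  have hζ0 : ζ ≠ 0 := Complex.exp_ne_zero _
  have hζ3 : ζ ^ (3 : ℤ) = 1 := by
    rw [hζdef, ← Complex.exp_int_mul]
    rw [show ((3 : ℤ) : ℂ) * (2 * Real.pi * Complex.I / 3) = 2 * Real.pi * Complex.I by
      push_cast; ring]
    exact Complex.exp_two_pi_mul_I
  have hζm3 : ζ ^ (-3 : ℤ) = 1 := by
    rw [zpow_neg, hζ3, inv_one]
  -- pointwise equivariance of the undifferentiated function
  have hfeq : ∀ s ∈ S, Qfun (cayley (γ s)) / cayley (γ s)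
      = ζ⁻¹ * (Qfun (cayley s) / cayley s) := by
    intro s hs
    rw [hγC s hs]
    unfold Qfun
    rw [mul_zpow, mul_zpow, hζ3, hζm3, one_mul, one_mul]
    have hc := cayley_ne_zero s
    field_simp
  -- derivative of the composed function, computed two ways
  have key : deriv ((fun s : ℝ => Qfun (cayley s) / cayley s) ∘ γ) t = ζ⁻¹ * pfun t := by
    have hev : ((fun s : ℝ => Qfun (cayley s) / cayley s) ∘ γ)
        =ᶠ[nhds t] fun s => ζ⁻¹ * (Qfun (cayley s) / cayley s) := by
      filter_upwards [hS.mem_nhds ht] with s hs using hfeq s hs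
    rw [hev.deriv_eq, deriv_const_mul _ (g_diff t)]
    rfl
  have chain : deriv ((fun s : ℝ => Qfun (cayley s) / cayley s) ∘ γ) t
      = deriv γ t • deriv (fun s : ℝ => Qfun (cayley s) / cayley s) (γ t) :=
    deriv.scomp t (g_diff (γ t)) (hγdiff t ht)
  constructor
  · have : pfun (γ t) * ((deriv γ t : ℝ) : ℂ)
        = deriv γ t • deriv (fun s : ℝ => Qfun (cayley s) / cayley s) (γ t) := by
      rw [Complex.real_smul, mul_comm]; rfl
    rw [this, ← chain, key]
  · rw [← Complex.exp_neg]
    congr 1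
    ring
end

section
/- Suppose U: D → SL(2,ℂ) satisfies U⁻¹dU = A dx + B dy with A = A₀ + λA₁ and B = λ⁻¹B₁ (A₀, A₁, B₁ independent of λ), and suppose U = P·V where V: D → SL(2,ℂ) admits an expansion V = V₀ + λ⁻¹V₋₁ + λ⁻²V₋₂ + … in non-positive powers of λ and P admits an expansion in non-negative powers of λ with zero constant-term variation, such that P⁻¹dP = V(Adx + Bdy)V⁻¹ − dV·V⁻¹ contains only strictly positive powers of λ. Then P is independent of y. -/
open Matrix

attribute [local instance] Matrix.normedAddCommGroup Matrix.normedSpace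

noncomputable def pdy {E : Type*} [NormedAddCommGroup E] [NormedSpace ℝ E]
    (f : ℝ × ℝ → E) (p : ℝ × ℝ) : E := fderiv ℝ f p (0, 1)

abbrev M2 := Matrix (Fin 2) (Fin 2) ℂ

noncomputable def mulCLM : M2 →L[ℝ] M2 →L[ℝ] M2 :=
  LinearMap.toContinuousLinearMap
    ((LinearMap.toContinuousLinearMap : (M2 →ₗ[ℝ] M2) ≃ₗ[ℝ] (M2 →L[ℝ] M2)).toLinearMap ∘ₗ
      LinearMap.mul ℝ M2)

@[simp] lemma mulCLM_apply (a b : M2) : mulCLM a b = a * b := by simp [mulCLM]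

lemma pdy_mul {f g : ℝ × ℝ → M2} {p : ℝ × ℝ} (hf : DifferentiableAt ℝ f p)
    (hg : DifferentiableAt ℝ g p) :
    pdy (fun q => f q * g q) p = pdy f p * g p + f p * pdy g p := by
  have h := mulCLM.hasFDerivAt_of_bilinear hf.hasFDerivAt hg.hasFDerivAt
  have h2 : HasFDerivAt (fun q => f q * g q)
      (mulCLM.precompR (ℝ × ℝ) (f p) (fderiv ℝ g p) +
        mulCLM.precompL (ℝ × ℝ) (fderiv ℝ f p) (g p)) p := by
    refine h.congr_of_eventuallyEq ?_
    filter_upwards with q; exact (mulCLM_apply _ _).symm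
  rw [pdy, h2.fderiv]
  simp only [ContinuousLinearMap.precompR, ContinuousLinearMap.precompL,
    ContinuousLinearMap.add_apply, ContinuousLinearMap.comp_apply,
    ContinuousLinearMap.flip_apply, mulCLM_apply, pdy]
  exact add_comm _ _

lemma pdy_congr {f g : ℝ × ℝ → M2} {p : ℝ × ℝ} (h : f =ᶠ[nhds p] g) :
    pdy f p = pdy g p := by
  simp only [pdy]
  exact congrArg (fun L => L ((0 : ℝ), (1 : ℝ))) (h.fderiv_eq (𝕜 := ℝ))

lemma pdy_sum {ι : Type*} (s : Finset ι) (f : ι → ℝ × ℝ → M2) (c : ι → ℝ) {p : ℝ × ℝ}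
    (hf : ∀ i ∈ s, DifferentiableAt ℝ (f i) p) :
    pdy (fun q => ∑ i ∈ s, c i • f i q) p = ∑ i ∈ s, c i • pdy (f i) p := by
  have h : HasFDerivAt (fun q => ∑ i ∈ s, c i • f i q)
      (∑ i ∈ s, c i • fderiv ℝ (f i) p) p :=
    HasFDerivAt.fun_sum (fun i hi => ((hf i hi).hasFDerivAt.const_smul (c i)))
  rw [pdy]
  erw [h.fderiv]
  simp only [pdy]
  exact map_sum (ContinuousLinearMap.apply ℝ M2 ((0 : ℝ), (1 : ℝ))) _ _

open Polynomial in
lemma coeffs_zero (K : ℕ) (a : ℕ → ℂ)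
    (h : ∀ t : ℝ, t ≠ 0 → ∑ k ∈ Finset.range K, a k * (t : ℂ) ^ k = 0) :
    ∀ k < K, a k = 0 := by
  set q : ℂ[X] := ∑ k ∈ Finset.range K, C (a k) * X ^ k with hq
  have hq0 : q = 0 := by
    apply Polynomial.eq_zero_of_infinite_isRoot
    apply Set.Infinite.mono (s := (fun t : ℝ => (t : ℂ)) '' {t : ℝ | t ≠ 0})
    · rintro x ⟨t, ht, rfl⟩
      simp only [Polynomial.IsRoot, hq, eval_finset_sum, eval_mul, eval_C, eval_pow, eval_X,
        Set.mem_setOf_eq]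
      exact h t ht
    · apply Set.Infinite.image
      · exact fun x _ y _ hxy => Complex.ofReal_injective hxy
      · have : ({t : ℝ | t ≠ 0}).Infinite := Set.Finite.infinite_compl (Set.finite_singleton 0)
        simpa [Set.compl_def] using this
  intro k hk
  have := congrArg (fun p => Polynomial.coeff p k) hq0
  simp only [hq, Polynomial.finset_sum_coeff, Polynomial.coeff_C_mul, Polynomial.coeff_X_pow,
    Polynomial.coeff_zero, mul_ite, mul_one, mul_zero] at this
  rwa [Finset.sum_ite_eq (Finset.range K) k a, if_pos (Finset.mem_range.2 hk)] at this

lemma coeffs_zero_mat (K : ℕ) (a : ℕ → M2)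
    (h : ∀ t : ℝ, t ≠ 0 → ∑ k ∈ Finset.range K, (t ^ k) • a k = 0) :
    ∀ k < K, a k = 0 := by
  intro k hk
  ext i j
  refine coeffs_zero K (fun k => a k i j) (fun t ht => ?_) k hk
  have := congrArg (fun A : M2 => A i j) (h t ht)
  simpa [Matrix.sum_apply, Matrix.smul_apply, Complex.real_smul, mul_comm] using this

lemma vandermonde_rep (N : ℕ) (D : Set (ℝ × ℝ)) (V : ℝ → ℝ × ℝ → M2) (Vc : ℕ → ℝ × ℝ → M2)
    (hVexp : ∀ l : ℝ, l ≠ 0 → ∀ p ∈ D, V l p = ∑ n ∈ Finset.range N, (l⁻¹ ^ n) • Vc n p) :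
    ∃ A : Matrix (Fin N) (Fin N) ℝ, ∀ n : Fin N, ∀ q ∈ D,
      Vc n q = ∑ k : Fin N, A n k • V ((k : ℕ) + 1 : ℝ) q := by
  set x : Fin N → ℝ := fun k => (((k : ℕ) : ℝ) + 1)⁻¹ with hx
  have hxinj : Function.Injective x := by
    intro a b hab
    have : ((a : ℕ) : ℝ) + 1 = ((b : ℕ) : ℝ) + 1 := by
      have := congrArg (fun y : ℝ => y⁻¹) hab
      simpa [hx, inv_inv] using this
    have : (a : ℕ) = (b : ℕ) := by exact_mod_cast (by linarith : ((a:ℕ):ℝ) = (b:ℕ))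
    exact Fin.ext this
  set Vm := Matrix.vandermonde x with hVm
  have hdet : IsUnit Vm.det := by
    rw [isUnit_iff_ne_zero, hVm, Matrix.det_vandermonde]
    apply Finset.prod_ne_zero_iff.2
    intro i _
    apply Finset.prod_ne_zero_iff.2
    intro j hj
    have : i < j := by simpa [Finset.mem_Ioi] using hj
    exact sub_ne_zero.2 fun hh => absurd (hxinj hh) (ne_of_gt this)
  have h1 : Vm⁻¹ * Vm = 1 := Matrix.nonsing_inv_mul Vm hdet
  refine ⟨Vm⁻¹, fun n q hq => ?_⟩
  have hks : ∀ k : Fin N, (((k : ℕ) : ℝ) + 1) ≠ 0 := by intro k; positivity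
  calc Vc n q = ∑ m : Fin N, ((1 : Matrix (Fin N) (Fin N) ℝ) n m) • Vc m q := by
        simp [Matrix.one_apply, Fintype.sum_ite_eq]
    _ = ∑ m : Fin N, ((Vm⁻¹ * Vm) n m) • Vc m q := by rw [h1]
    _ = ∑ m : Fin N, ∑ k : Fin N, (Vm⁻¹ n k * Vm k m) • Vc m q := by
        simp [Matrix.mul_apply, Finset.sum_smul]
    _ = ∑ k : Fin N, ∑ m : Fin N, Vm⁻¹ n k • (Vm k m • Vc m q) := by
        rw [Finset.sum_comm]; simp [smul_smul]
    _ = ∑ k : Fin N, Vm⁻¹ n k • V ((k : ℕ) + 1 : ℝ) q := by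
        refine Finset.sum_congr rfl fun k _ => ?_
        rw [← Finset.smul_sum]
        congr 1
        rw [hVexp _ (hks k) q hq, ← Fin.sum_univ_eq_sum_range]
        refine Finset.sum_congr rfl fun m _ => ?_
        simp [hVm, Matrix.vandermonde, hx]

lemma collapse {ι : Type*} (K : ℕ) (e : ι → ℕ) (Z : ι → M2) (s : Finset ι) (t : ℝ)
    (he : ∀ n ∈ s, e n < K) :
    ∑ k ∈ Finset.range K, ∑ n ∈ s, (t ^ k) • (if e n = k then Z n else 0) =
      ∑ n ∈ s, t ^ (e n) • Z n := by
  rw [Finset.sum_comm]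
  refine Finset.sum_congr rfl fun n hn => ?_
  have : ∀ k, (t ^ k) • (if e n = k then Z n else 0) =
      (if e n = k then (t ^ k) • Z n else 0) := by
    intro k; split <;> simp
  simp only [this]
  rw [Finset.sum_ite_eq (Finset.range K) (e n) (fun k => (t ^ k) • Z n),
    if_pos (Finset.mem_range.2 (he n hn))]

lemma pow_inv_helper (t : ℝ) (ht : t ≠ 0) (c d e : ℕ) (h : e + c = d) :
    t ^ d * t⁻¹ ^ c = t ^ e := by
  have hd : t ^ d = t ^ e * t ^ c := by rw [← pow_add, h]
  rw [inv_pow, hd, mul_assoc, mul_inv_cancel₀ (pow_ne_zero _ ht), mul_one]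

/-- Proposition 1 ('onlyXonlyY') in algebraic form: in the Birkhoff splitting U = P·V,
where P expands in non-negative powers of λ, V and V⁻¹ expand in non-positive powers of λ,
U⁻¹∂U/∂y = λ⁻¹B₁, and P⁻¹∂P/∂y contains only strictly positive powers of λ,
the factor P is independent of y: ∂P/∂y = 0. -/
theorem plus_factor_independent_of_y (D : Set (ℝ × ℝ)) (hD : IsOpen D) (N : ℕ)
    (U P V : ℝ → ℝ × ℝ → Matrix (Fin 2) (Fin 2) ℂ)
    (B₁ : ℝ × ℝ → Matrix (Fin 2) (Fin 2) ℂ)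
    (Pc Vc Wc Cc : ℕ → ℝ × ℝ → Matrix (Fin 2) (Fin 2) ℂ)
    (hPunit : ∀ l : ℝ, l ≠ 0 → ∀ p ∈ D, IsUnit (P l p))
    (hVunit : ∀ l : ℝ, l ≠ 0 → ∀ p ∈ D, IsUnit (V l p))
    (hsplit : ∀ l : ℝ, l ≠ 0 → ∀ p ∈ D, U l p = P l p * V l p)
    (hPexp : ∀ l : ℝ, l ≠ 0 → ∀ p ∈ D,
      P l p = ∑ n ∈ Finset.range N, (l ^ n) • Pc n p)
    (hVexp : ∀ l : ℝ, l ≠ 0 → ∀ p ∈ D,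
      V l p = ∑ n ∈ Finset.range N, (l⁻¹ ^ n) • Vc n p)
    (hVinv : ∀ l : ℝ, l ≠ 0 → ∀ p ∈ D,
      (V l p)⁻¹ = ∑ n ∈ Finset.range N, (l⁻¹ ^ n) • Wc n p)
    (hVdiff : ∀ l : ℝ, l ≠ 0 → ∀ p ∈ D, DifferentiableAt ℝ (V l) p)
    (hPdiff : ∀ l : ℝ, l ≠ 0 → ∀ p ∈ D, DifferentiableAt ℝ (P l) p)
    (hMC : ∀ l : ℝ, l ≠ 0 → ∀ p ∈ D, pdy (U l) p = U l p * (l⁻¹ • B₁ p))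
    (hpos : ∀ l : ℝ, l ≠ 0 → ∀ p ∈ D,
      (P l p)⁻¹ * pdy (P l) p = ∑ n ∈ Finset.range N, (l ^ (n + 1)) • Cc n p) :
    ∀ l : ℝ, l ≠ 0 → ∀ p ∈ D, pdy (P l) p = 0 := by
  intro l hl p hp
  -- Vandermonde: the coefficients Vc n are (near p) linear combinations of the V t, hence
  -- differentiable at p.
  obtain ⟨A, hA⟩ := vandermonde_rep N D V Vc hVexp
  have hVcdiff : ∀ m ∈ Finset.range N, DifferentiableAt ℝ (Vc m) p := by
    intro m hm
    set n : Fin N := ⟨m, Finset.mem_range.1 hm⟩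
    have hg : DifferentiableAt ℝ (fun q => ∑ k : Fin N, A n k • V ((k : ℕ) + 1 : ℝ) q) p := by
      apply DifferentiableAt.fun_sum
      intro k _
      have : (((k : ℕ) : ℝ) + 1) ≠ 0 := by positivity
      exact (hVdiff _ this p hp).const_smul (A n k)
    have heq : Vc m =ᶠ[nhds p] fun q => ∑ k : Fin N, A n k • V ((k : ℕ) + 1 : ℝ) q := by
      filter_upwards [hD.mem_nhds hp] with q hq
      exact hA n q hq
    exact hg.congr_of_eventuallyEq heq
  -- derivative of V t at p through the expansion
  have hVt : ∀ t : ℝ, t ≠ 0 →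
      pdy (V t) p = ∑ m ∈ Finset.range N, (t⁻¹ ^ m) • pdy (Vc m) p := by
    intro t ht
    have heq : V t =ᶠ[nhds p] fun q => ∑ m ∈ Finset.range N, (t⁻¹ ^ m) • Vc m q := by
      filter_upwards [hD.mem_nhds hp] with q hq
      exact hVexp t ht q hq
    rw [pdy_congr heq, pdy_sum _ _ _ hVcdiff]
  -- the key algebraic identity for every t ≠ 0
  have key : ∀ t : ℝ, t ≠ 0 →
      ∑ n ∈ Finset.range N, (t ^ (n + 1)) • Cc n p =
        V t p * (t⁻¹ • B₁ p) * (V t p)⁻¹ - pdy (V t) p * (V t p)⁻¹ := by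
    intro t ht
    have hUeq : U t =ᶠ[nhds p] fun q => P t q * V t q := by
      filter_upwards [hD.mem_nhds hp] with q hq
      exact hsplit t ht q hq
    have hprod : pdy (U t) p = pdy (P t) p * V t p + P t p * pdy (V t) p := by
      rw [pdy_congr hUeq, pdy_mul (hPdiff t ht p hp) (hVdiff t ht p hp)]
    have hPdet := (Matrix.isUnit_iff_isUnit_det _).1 (hPunit t ht p hp)
    have hVdet := (Matrix.isUnit_iff_isUnit_det _).1 (hVunit t ht p hp)
    have hPP : (P t p)⁻¹ * P t p = 1 := Matrix.nonsing_inv_mul _ hPdet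
    have hVV : V t p * (V t p)⁻¹ = 1 := Matrix.mul_nonsing_inv _ hVdet
    have hMCt := hMC t ht p hp
    rw [hsplit t ht p hp] at hMCt
    -- P⁻¹ * pdy P * V = V * (t⁻¹ B₁) * V - pdy V ... rearrange
    have e1 : (P t p)⁻¹ * pdy (P t) p * V t p =
        V t p * (t⁻¹ • B₁ p) - pdy (V t) p := by
      have : pdy (P t) p * V t p = P t p * V t p * (t⁻¹ • B₁ p) - P t p * pdy (V t) p := by
        rw [← hMCt, hprod]; abel
      calc (P t p)⁻¹ * pdy (P t) p * V t p = (P t p)⁻¹ * (pdy (P t) p * V t p) := by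
            rw [mul_assoc]
        _ = (P t p)⁻¹ * (P t p * V t p * (t⁻¹ • B₁ p)) - (P t p)⁻¹ * (P t p * pdy (V t) p) := by
            rw [this, mul_sub]
        _ = V t p * (t⁻¹ • B₁ p) - pdy (V t) p := by
            rw [← mul_assoc, ← mul_assoc, ← mul_assoc, hPP, one_mul, one_mul]
    calc ∑ n ∈ Finset.range N, (t ^ (n + 1)) • Cc n p
        = (P t p)⁻¹ * pdy (P t) p := (hpos t ht p hp).symm
      _ = (P t p)⁻¹ * pdy (P t) p * (V t p * (V t p)⁻¹) := by rw [hVV, mul_one]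
      _ = ((P t p)⁻¹ * pdy (P t) p * V t p) * (V t p)⁻¹ := by rw [← mul_assoc]
      _ = (V t p * (t⁻¹ • B₁ p) - pdy (V t) p) * (V t p)⁻¹ := by rw [e1]
      _ = V t p * (t⁻¹ • B₁ p) * (V t p)⁻¹ - pdy (V t) p * (V t p)⁻¹ := by rw [sub_mul]
  -- expanded form of the key identity
  have key2 : ∀ t : ℝ, t ≠ 0 →
      ∑ n ∈ Finset.range N, (t ^ (n + 1)) • Cc n p =
        (∑ a ∈ Finset.range N, ∑ b ∈ Finset.range N,
          (t⁻¹ ^ (a + b + 1)) • (Vc a p * B₁ p * Wc b p)) -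
        (∑ a ∈ Finset.range N, ∑ b ∈ Finset.range N,
          (t⁻¹ ^ (a + b)) • (pdy (Vc a) p * Wc b p)) := by
    intro t ht
    rw [key t ht, hVinv t ht p hp, hVt t ht, hVexp t ht p hp]
    congr 1
    · rw [Finset.sum_mul, Finset.sum_mul]
      refine Finset.sum_congr rfl fun a _ => ?_
      rw [Finset.mul_sum]
      refine Finset.sum_congr rfl fun b _ => ?_
      simp only [smul_mul_assoc, mul_smul_comm, smul_smul]
      congr 1
      rw [pow_add, pow_add, pow_one]
      ring
    · rw [Finset.sum_mul]
      refine Finset.sum_congr rfl fun a _ => ?_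
      rw [Finset.mul_sum]
      refine Finset.sum_congr rfl fun b _ => ?_
      simp only [smul_mul_assoc, mul_smul_comm, smul_smul]
      congr 1
      rw [pow_add]
      ring
  -- package all coefficients into a single polynomial identity
  set X : ℕ → ℕ → M2 := fun a b => Vc a p * B₁ p * Wc b p with hX
  set Y : ℕ → ℕ → M2 := fun a b => pdy (Vc a) p * Wc b p with hY
  set E : ℕ → M2 := fun k =>
    (∑ n ∈ Finset.range N, if 2 * N + n = k then Cc n p else 0)
    - (∑ ab ∈ Finset.range N ×ˢ Finset.range N,
        if 2 * N - 2 - (ab.1 + ab.2) = k then X ab.1 ab.2 else 0)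
    + (∑ ab ∈ Finset.range N ×ˢ Finset.range N,
        if 2 * N - 1 - (ab.1 + ab.2) = k then Y ab.1 ab.2 else 0) with hE
  have hEzero : ∀ t : ℝ, t ≠ 0 → ∑ k ∈ Finset.range (3 * N), (t ^ k) • E k = 0 := by
    intro t ht
    have c1 : ∑ k ∈ Finset.range (3 * N), ∑ n ∈ Finset.range N,
        (t ^ k) • (if 2 * N + n = k then Cc n p else 0) =
        ∑ n ∈ Finset.range N, t ^ (2 * N + n) • Cc n p := by
      refine collapse (3 * N) _ _ _ t ?_
      intro n hn
      have := Finset.mem_range.1 hn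
      show 2 * N + n < 3 * N
      omega
    have c2 : ∑ k ∈ Finset.range (3 * N), ∑ ab ∈ Finset.range N ×ˢ Finset.range N,
        (t ^ k) • (if 2 * N - 2 - (ab.1 + ab.2) = k then X ab.1 ab.2 else 0) =
        ∑ ab ∈ Finset.range N ×ˢ Finset.range N,
          t ^ (2 * N - 2 - (ab.1 + ab.2)) • X ab.1 ab.2 := by
      refine collapse (3 * N) _ _ _ t ?_
      intro ab hab
      have h1 := Finset.mem_range.1 (Finset.mem_product.1 hab).1
      show 2 * N - 2 - (ab.1 + ab.2) < 3 * N
      omega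
    have c3 : ∑ k ∈ Finset.range (3 * N), ∑ ab ∈ Finset.range N ×ˢ Finset.range N,
        (t ^ k) • (if 2 * N - 1 - (ab.1 + ab.2) = k then Y ab.1 ab.2 else 0) =
        ∑ ab ∈ Finset.range N ×ˢ Finset.range N,
          t ^ (2 * N - 1 - (ab.1 + ab.2)) • Y ab.1 ab.2 := by
      refine collapse (3 * N) _ _ _ t ?_
      intro ab hab
      have h1 := Finset.mem_range.1 (Finset.mem_product.1 hab).1
      show 2 * N - 1 - (ab.1 + ab.2) < 3 * N
      omega
    have expand : ∑ k ∈ Finset.range (3 * N), (t ^ k) • E k =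
        (∑ n ∈ Finset.range N, t ^ (2 * N + n) • Cc n p)
        - (∑ ab ∈ Finset.range N ×ˢ Finset.range N, t ^ (2 * N - 2 - (ab.1 + ab.2)) • X ab.1 ab.2)
        + (∑ ab ∈ Finset.range N ×ˢ Finset.range N,
            t ^ (2 * N - 1 - (ab.1 + ab.2)) • Y ab.1 ab.2) := by
      rw [← c1, ← c2, ← c3, ← Finset.sum_sub_distrib, ← Finset.sum_add_distrib]
      refine Finset.sum_congr rfl fun k _ => ?_
      simp only [hE, smul_sub, smul_add, Finset.smul_sum]
    rw [expand]
    have ep1 : ∑ n ∈ Finset.range N, t ^ (2 * N + n) • Cc n p =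
        t ^ (2 * N - 1) • ∑ n ∈ Finset.range N, (t ^ (n + 1)) • Cc n p := by
      rw [Finset.smul_sum]
      refine Finset.sum_congr rfl fun n hn => ?_
      have hn' := Finset.mem_range.1 hn
      rw [smul_smul, ← pow_add]
      congr 2
      omega
    have ep2 : ∑ ab ∈ Finset.range N ×ˢ Finset.range N,
        t ^ (2 * N - 2 - (ab.1 + ab.2)) • X ab.1 ab.2 =
        t ^ (2 * N - 1) • ∑ a ∈ Finset.range N, ∑ b ∈ Finset.range N,
          (t⁻¹ ^ (a + b + 1)) • X a b := by
      rw [Finset.smul_sum, Finset.sum_product]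
      refine Finset.sum_congr rfl fun a ha => ?_
      rw [Finset.smul_sum]
      refine Finset.sum_congr rfl fun b hb => ?_
      have ha' := Finset.mem_range.1 ha
      have hb' := Finset.mem_range.1 hb
      rw [smul_smul, pow_inv_helper t ht (a + b + 1) (2 * N - 1) (2 * N - 2 - (a + b)) (by omega)]
    have ep3 : ∑ ab ∈ Finset.range N ×ˢ Finset.range N,
        t ^ (2 * N - 1 - (ab.1 + ab.2)) • Y ab.1 ab.2 =
        t ^ (2 * N - 1) • ∑ a ∈ Finset.range N, ∑ b ∈ Finset.range N,
          (t⁻¹ ^ (a + b)) • Y a b := by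
      rw [Finset.smul_sum, Finset.sum_product]
      refine Finset.sum_congr rfl fun a ha => ?_
      rw [Finset.smul_sum]
      refine Finset.sum_congr rfl fun b hb => ?_
      have ha' := Finset.mem_range.1 ha
      have hb' := Finset.mem_range.1 hb
      rw [smul_smul, pow_inv_helper t ht (a + b) (2 * N - 1) (2 * N - 1 - (a + b)) (by omega)]
    rw [ep1, ep2, ep3, key2 t ht, smul_sub]
    abel
  have hEk := coeffs_zero_mat (3 * N) E hEzero
  -- extract: Cc n p = 0 for all n < N
  have hCc : ∀ n ∈ Finset.range N, Cc n p = 0 := by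
    intro n hn
    have hn' := Finset.mem_range.1 hn
    have h1 := hEk (2 * N + n) (by omega)
    simp only [hE] at h1
    have e1 : (∑ m ∈ Finset.range N, if 2 * N + m = 2 * N + n then Cc m p else 0) = Cc n p := by
      have : ∀ m, (if 2 * N + m = 2 * N + n then Cc m p else 0) =
          (if n = m then Cc m p else 0) := by
        intro m
        have hiff : (2 * N + m = 2 * N + n) ↔ (n = m) := by omega
        simp only [hiff]
      simp only [this]
      rw [Finset.sum_ite_eq (Finset.range N) n (fun m => Cc m p), if_pos hn]
    have e2 : (∑ ab ∈ Finset.range N ×ˢ Finset.range N,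
        if 2 * N - 2 - (ab.1 + ab.2) = 2 * N + n then X ab.1 ab.2 else 0) = 0 := by
      apply Finset.sum_eq_zero
      intro ab _
      rw [if_neg (by omega)]
    have e3 : (∑ ab ∈ Finset.range N ×ˢ Finset.range N,
        if 2 * N - 1 - (ab.1 + ab.2) = 2 * N + n then Y ab.1 ab.2 else 0) = 0 := by
      apply Finset.sum_eq_zero
      intro ab _
      rw [if_neg (by omega)]
    rw [e1, e2, e3] at h1
    simpa using h1
  -- finish
  have hposl := hpos l hl p hp
  rw [Finset.sum_congr rfl (fun n hn => by rw [hCc n hn, smul_zero]), Finset.sum_const_zero]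
    at hposl
  have hPdet := (Matrix.isUnit_iff_isUnit_det _).1 (hPunit l hl p hp)
  have h1 : P l p * (P l p)⁻¹ = 1 := Matrix.mul_nonsing_inv _ hPdet
  calc pdy (P l) p = P l p * (P l p)⁻¹ * pdy (P l) p := by rw [h1, one_mul]
    _ = P l p * ((P l p)⁻¹ * pdy (P l) p) := by rw [mul_assoc]
    _ = 0 := by rw [hposl, mul_zero]
end
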